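/- If W is a maximal independent set of G(m,n) containing x_{i,j} and x_{i,k} with j < k, then x_{i,ℓ} ∈ W for all j < ℓ < k; similarly if W contains x_{i,j} and x_{k,j} with i < k, then x_{ℓ,j} ∈ W for all i < ℓ < k. -/

import Mathlib

/-- The graph `G(m,n)`: vertices are pairs `(i,j)` (0-indexed, corresponding to
`x_{i+1,j+1}`), and `x_{i,j} ~ x_{k,l}` iff (`i < k` and `j > l`) or (`i > k` and `j < l`). -/
def gridGraph (m n : ℕ) : SimpleGraph (Fin m × Fin n) where
  Adj u v := (u.1 < v.1 ∧ v.2 < u.2) ∨ (v.1 < u.1 ∧ u.2 < v.2)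
  symm := ⟨fun u v h => Or.symm h⟩
  loopless := ⟨fun u h => by rcases h with ⟨h, -⟩ | ⟨h, -⟩ <;> exact absurd h (lt_irrefl _)⟩

/-- `W` is an independent set of the induced subgraph of `G` on `A`. -/
def IndepOn {V : Type*} (G : SimpleGraph V) (A W : Set V) : Prop :=
  W ⊆ A ∧ ∀ u ∈ W, ∀ v ∈ W, ¬ G.Adj u v

/-- `W` is a maximal independent set of the induced subgraph of `G` on `A`. -/
def MaxIndepOn {V : Type*} (G : SimpleGraph V) (A W : Set V) : Prop :=
  IndepOn G A W ∧ ∀ W', IndepOn G A W' → W ⊆ W' → W' = W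

/-- Maximal independent sets of `G(m,n)` are "connected" along rows and
columns: vertices of `W` in the same row (resp. column) have all intermediate vertices
of that row (resp. column) in `W` as well. -/
theorem stmt2 (m n : ℕ)
    (W : Set (Fin m × Fin n))
    (hW : MaxIndepOn (gridGraph m n) Set.univ W) :
    (∀ (i : Fin m) (j k l : Fin n),
      (i, j) ∈ W → (i, k) ∈ W → j < l → l < k → (i, l) ∈ W) ∧
    (∀ (i k l : Fin m) (j : Fin n),
      (i, j) ∈ W → (k, j) ∈ W → i < l → l < k → (l, j) ∈ W) := by
  obtain ⟨⟨-, hind⟩, hmax⟩ := hW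
  have key : ∀ v : Fin m × Fin n, v ∉ W → ∃ w ∈ W, (gridGraph m n).Adj v w := by
    intro v hv
    by_contra h
    push_neg at h
    have : insert v W = W := by
      apply hmax
      · refine ⟨fun _ _ => trivial, ?_⟩
        intro a ha b hb
        rcases ha with rfl | ha <;> rcases hb with rfl | hb
        · exact (gridGraph m n).irrefl
        · exact h b hb
        · exact fun hadj => h a ha ((gridGraph m n).adj_symm hadj)
        · exact hind a ha b hb
      · exact Set.subset_insert _ _
    exact hv (this ▸ Set.mem_insert v W)
  constructor
  · intro i j k l hj hk hjl hlk
    by_contra hl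
    obtain ⟨⟨a, b⟩, hw, hadj⟩ := key (i, l) hl
    rcases hadj with ⟨h1, h2⟩ | ⟨h1, h2⟩
    · exact hind (i, k) hk (a, b) hw (Or.inl ⟨h1, lt_trans h2 hlk⟩)
    · exact hind (i, j) hj (a, b) hw (Or.inr ⟨h1, lt_trans hjl h2⟩)
  · intro i k l j hi hk hil hlk
    by_contra hl
    obtain ⟨⟨a, b⟩, hw, hadj⟩ := key (l, j) hl
    rcases hadj with ⟨h1, h2⟩ | ⟨h1, h2⟩
    · exact hind (i, j) hi (a, b) hw (Or.inl ⟨lt_trans hil h1, h2⟩)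
    · exact hind (k, j) hk (a, b) hw (Or.inr ⟨lt_trans h1 hlk, h2⟩)
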